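/- Let a, b, c, d be positive real numbers with a > b and c > d, and let α, β be real numbers with 0 < α < 1, 0 < β < 1 and α + β = 1. Then equality a^α · c^β − b^α · d^β = (a − b)^α · (c − d)^β holds if and only if a/b = c/d. -/

import Mathlib

open Real

/-- Strict two-point weighted AM–GM. -/
lemma amgm_strict {x y α β : ℝ} (hx : 0 < x) (hy : 0 < y) (hxy : x ≠ y)
    (hα : 0 < α) (hβ : 0 < β) (hαβ : α + β = 1) :
    x ^ α * y ^ β < α * x + β * y := by
  have hlog : α * Real.log x + β * Real.log y < Real.log (α * x + β * y) := by
    have := strictConcaveOn_log_Ioi.2 (Set.mem_Ioi.2 hx) (Set.mem_Ioi.2 hy) hxy hα hβ hαβ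
    simpa [smul_eq_mul] using this
  have h1 : x ^ α * y ^ β = Real.exp (α * Real.log x + β * Real.log y) := by
    rw [Real.exp_add, ← Real.log_rpow hx, ← Real.log_rpow hy, Real.exp_log (Real.rpow_pos_of_pos hx α),
      Real.exp_log (Real.rpow_pos_of_pos hy β)]
  have hpos : 0 < α * x + β * y := by positivity
  calc x ^ α * y ^ β = Real.exp (α * Real.log x + β * Real.log y) := h1
    _ < Real.exp (Real.log (α * x + β * y)) := Real.exp_lt_exp.2 hlog
    _ = α * x + β * y := Real.exp_log hpos

theorem stmt_1 (a b c d α β : ℝ)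
    (ha : 0 < a) (hb : 0 < b) (hc : 0 < c) (hd : 0 < d)
    (hab : a > b) (hcd : c > d)
    (hα0 : 0 < α) (hα1 : α < 1) (hβ0 : 0 < β) (hβ1 : β < 1)
    (hαβ : α + β = 1) :
    a ^ α * c ^ β - b ^ α * d ^ β = (a - b) ^ α * (c - d) ^ β ↔ a / b = c / d := by
  have hab' : 0 < a - b := by linarith
  have hcd' : 0 < c - d := by linarith
  constructor
  · intro heq
    by_contra hne
    -- strict inequality: b^α d^β + (a-b)^α (c-d)^β < a^α c^β
    have hratio : b / a ≠ d / c := by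
      intro h
      apply hne
      field_simp at h ⊢
      linarith [h]
    have h1 : (b / a) ^ α * (d / c) ^ β < α * (b / a) + β * (d / c) :=
      amgm_strict (by positivity) (by positivity) hratio hα0 hβ0 hαβ
    have h2 : ((a - b) / a) ^ α * ((c - d) / c) ^ β ≤ α * ((a - b) / a) + β * ((c - d) / c) :=
      Real.geom_mean_le_arith_mean2_weighted hα0.le hβ0.le (by positivity) (by positivity) hαβ
    have hsum : (b / a) ^ α * (d / c) ^ β + ((a - b) / a) ^ α * ((c - d) / c) ^ β < 1 := by
      have e : b / a + (a - b) / a = 1 := by field_simp; ring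
      have e' : d / c + (c - d) / c = 1 := by field_simp; ring
      have : α * (b / a) + β * (d / c) + (α * ((a - b) / a) + β * ((c - d) / c)) = 1 := by
        calc α * (b / a) + β * (d / c) + (α * ((a - b) / a) + β * ((c - d) / c))
            = α * (b / a + (a - b) / a) + β * (d / c + (c - d) / c) := by ring
          _ = 1 := by rw [e, e']; linarith
      linarith
    have e1 : (b / a) ^ α * (d / c) ^ β = (b ^ α * d ^ β) / (a ^ α * c ^ β) := by
      rw [Real.div_rpow hb.le ha.le, Real.div_rpow hd.le hc.le]
      ring
    have e2 : ((a - b) / a) ^ α * ((c - d) / c) ^ β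
        = ((a - b) ^ α * (c - d) ^ β) / (a ^ α * c ^ β) := by
      rw [Real.div_rpow hab'.le ha.le, Real.div_rpow hcd'.le hc.le]
      ring
    have hac : 0 < a ^ α * c ^ β := by positivity
    rw [e1, e2, ← add_div, div_lt_one hac] at hsum
    linarith [heq]
  · intro h
    have hbd : a * d = b * c := by
      field_simp at h
      linarith [h]
    have ht : a = (a / b) * b := by field_simp
    have hc' : c = (a / b) * d := by
      field_simp
      linarith [hbd]
    set t := a / b with htdef
    have ht1 : 1 < t := (one_lt_div hb).2 hab
    have ht0 : 0 < t := by linarith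
    have ht1' : 0 < t - 1 := by linarith
    have htab : a - b = (t - 1) * b := by rw [ht]; ring
    have htcd : c - d = (t - 1) * d := by rw [hc']; ring
    have hrt : ∀ s : ℝ, 0 < s → s ^ α * s ^ β = s := by
      intro s hs
      rw [← Real.rpow_add hs, hαβ, Real.rpow_one]
    calc a ^ α * c ^ β - b ^ α * d ^ β
        = (t * b) ^ α * (t * d) ^ β - b ^ α * d ^ β := by rw [← ht, ← hc']
      _ = (t ^ α * t ^ β) * (b ^ α * d ^ β) - b ^ α * d ^ β := by
          rw [Real.mul_rpow ht0.le hb.le, Real.mul_rpow ht0.le hd.le]; ring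
      _ = (t - 1) * (b ^ α * d ^ β) := by rw [hrt t ht0]; ring
      _ = ((t - 1) ^ α * (t - 1) ^ β) * (b ^ α * d ^ β) := by rw [hrt _ ht1']
      _ = (a - b) ^ α * (c - d) ^ β := by
          rw [htab, htcd, Real.mul_rpow ht1'.le hb.le, Real.mul_rpow ht1'.le hd.le]; ring
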